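/- Let $N = 1$, $s \in (0,1)$, $m \in \mathbb{N} \setminus \{0\}$, and define the polynomial $U(y,t) = \sum_{k=0}^{m-1} a_k\, y^{2k+1} t^{2m-2k-2}$ on $\mathbb{R}^2$, where $a_0 = 1$ and the coefficients satisfy the recursion $a_k = \frac{-2[(m-k)^2 - s(m-k)]}{k(2k+1)} a_{k-1}$ for $k \in \{1, \dots, m-1\}$. Then $U$ satisfies $\Delta U + \frac{1-2s}{t} \partial_t U = 0$ for all $(y,t)$ with $t \neq 0$, i.e. $t\,(\partial_{yy} U + \partial_{tt} U) + (1-2s)\, \partial_t U = 0$ on $\mathbb{R}^2$. -/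

import Mathlib

open Finset

/-- The polynomial `U(y,t) = ∑_{k=0}^{m-1} a_k y^{2k+1} t^{2m-2k-2}`. -/
noncomputable def Upoly (m : ℕ) (a : ℕ → ℝ) (y t : ℝ) : ℝ :=
  ∑ k ∈ Finset.range m, a k * y ^ (2 * k + 1) * t ^ (2 * m - 2 * k - 2)

lemma deriv_sum_pow (n : ℕ) (c : ℕ → ℝ) (p : ℕ → ℕ) :
    deriv (fun x : ℝ => ∑ k ∈ Finset.range n, c k * x ^ p k)
      = fun x => ∑ k ∈ Finset.range n, c k * ((p k : ℝ) * x ^ (p k - 1)) := by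
  funext x
  rw [deriv_fun_sum (fun k _ => (differentiableAt_pow (p k)).const_mul (c k))]
  refine Finset.sum_congr rfl fun k _ => ?_
  rw [deriv_const_mul _ (differentiableAt_pow _), deriv_pow_field]

/-- The telescoping term. -/
noncomputable def Fterm (m : ℕ) (a : ℕ → ℝ) (s y t : ℝ) (k : ℕ) : ℝ :=
  a k * ((2 * m - 2 * k - 2 : ℕ) : ℝ) * (((2 * m - 2 * k - 2 : ℕ) : ℝ) - 2 * s)
    * y ^ (2 * k + 1) * t ^ (2 * m - 2 * k - 2 - 1)

noncomputable def Phi (m : ℕ) (a : ℕ → ℝ) (s y t : ℝ) (k : ℕ) : ℝ :=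
  if k = 0 then 0 else Fterm m a s y t (k - 1)

lemma hBC (m : ℕ) (a : ℕ → ℝ) (s y t : ℝ) (k : ℕ) :
    t * (((a k * y ^ (2 * k + 1)) * ((2 * m - 2 * k - 2 : ℕ) : ℝ))
          * (((2 * m - 2 * k - 2 - 1 : ℕ) : ℝ) * t ^ (2 * m - 2 * k - 2 - 1 - 1)))
      + (1 - 2 * s) * (((a k * y ^ (2 * k + 1)) * ((2 * m - 2 * k - 2 : ℕ) : ℝ))
          * t ^ (2 * m - 2 * k - 2 - 1))
      = Fterm m a s y t k := by
  set e := 2 * m - 2 * k - 2 with he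
  rcases Nat.lt_or_ge e 2 with h | h
  · interval_cases e <;> simp [Fterm, ← he] <;> ring
  · obtain ⟨n, hn⟩ : ∃ n, e = n + 2 := ⟨e - 2, by omega⟩
    have h2 : e - 1 = n + 1 := by omega
    have h3 : e - 1 - 1 = n := by omega
    unfold Fterm
    rw [← he, hn]
    have h2' : n + 2 - 1 = n + 1 := rfl
    have h3' : n + 2 - 1 - 1 = n := rfl
    rw [h2', Nat.add_sub_cancel]
    push_cast
    ring

/-- For `N = 1`, the odd homogeneous polynomial `U(y,t) = ∑_{k=0}^{m-1} a_k y^{2k+1} t^{2m-2k-2}`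
with `a_0 = 1` and `a_k = -2[(m-k)² - s(m-k)]/(k(2k+1)) a_{k-1}` satisfies
`t (U_{yy} + U_{tt}) + (1-2s) U_t = 0` on all of `ℝ²`. -/
theorem stmt4 (s : ℝ) (hs : s ∈ Set.Ioo (0 : ℝ) 1) (m : ℕ) (hm : 1 ≤ m)
    (a : ℕ → ℝ) (ha0 : a 0 = 1)
    (harec : ∀ k : ℕ, 1 ≤ k → k ≤ m - 1 →
      a k = -2 * (((m : ℝ) - k) ^ 2 - s * ((m : ℝ) - k)) / ((k : ℝ) * (2 * k + 1)) * a (k - 1)) :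
    ∀ y t : ℝ,
      t * (deriv (deriv (fun y' => Upoly m a y' t)) y
            + deriv (deriv (fun t' => Upoly m a y t')) t)
        + (1 - 2 * s) * deriv (fun t' => Upoly m a y t') t = 0 := by
  intro y t
  have hy : (fun y' => Upoly m a y' t)
      = fun x => ∑ k ∈ Finset.range m, (a k * t ^ (2 * m - 2 * k - 2)) * x ^ (2 * k + 1) := by
    funext x; unfold Upoly
    exact Finset.sum_congr rfl fun k _ => by ring
  have hy1 : deriv (fun y' => Upoly m a y' t)
      = fun x => ∑ k ∈ Finset.range m,
          ((a k * t ^ (2 * m - 2 * k - 2)) * ((2 * k + 1 : ℕ) : ℝ)) * x ^ (2 * k) := by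
    rw [hy, deriv_sum_pow]
    funext x
    refine Finset.sum_congr rfl fun k _ => ?_
    have h : 2 * k + 1 - 1 = 2 * k := rfl
    rw [h]; ring
  have hy2 : deriv (deriv (fun y' => Upoly m a y' t)) y
      = ∑ k ∈ Finset.range m, ((a k * t ^ (2 * m - 2 * k - 2)) * ((2 * k + 1 : ℕ) : ℝ))
          * (((2 * k : ℕ) : ℝ) * y ^ (2 * k - 1)) := by
    rw [hy1, deriv_sum_pow]
  have ht : (fun t' => Upoly m a y t')
      = fun x => ∑ k ∈ Finset.range m, (a k * y ^ (2 * k + 1)) * x ^ (2 * m - 2 * k - 2) := by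
    funext x; unfold Upoly
    exact Finset.sum_congr rfl fun k _ => by ring
  have ht1 : deriv (fun t' => Upoly m a y t')
      = fun x => ∑ k ∈ Finset.range m,
          ((a k * y ^ (2 * k + 1)) * ((2 * m - 2 * k - 2 : ℕ) : ℝ)) * x ^ (2 * m - 2 * k - 2 - 1) := by
    rw [ht, deriv_sum_pow]
    funext x
    exact Finset.sum_congr rfl fun k _ => by ring
  have ht1' : deriv (fun t' => Upoly m a y t') t
      = ∑ k ∈ Finset.range m,
          ((a k * y ^ (2 * k + 1)) * ((2 * m - 2 * k - 2 : ℕ) : ℝ)) * t ^ (2 * m - 2 * k - 2 - 1) := by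
    rw [ht1]
  have ht2 : deriv (deriv (fun t' => Upoly m a y t')) t
      = ∑ k ∈ Finset.range m, ((a k * y ^ (2 * k + 1)) * ((2 * m - 2 * k - 2 : ℕ) : ℝ))
          * (((2 * m - 2 * k - 2 - 1 : ℕ) : ℝ) * t ^ (2 * m - 2 * k - 2 - 1 - 1)) := by
    rw [ht1, deriv_sum_pow]
  rw [hy2, ht1', ht2, ← Finset.sum_add_distrib, Finset.mul_sum, Finset.mul_sum,
    ← Finset.sum_add_distrib]
  have key : ∀ k ∈ Finset.range m,
      t * (((a k * t ^ (2 * m - 2 * k - 2)) * ((2 * k + 1 : ℕ) : ℝ))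
              * (((2 * k : ℕ) : ℝ) * y ^ (2 * k - 1))
            + ((a k * y ^ (2 * k + 1)) * ((2 * m - 2 * k - 2 : ℕ) : ℝ))
              * (((2 * m - 2 * k - 2 - 1 : ℕ) : ℝ) * t ^ (2 * m - 2 * k - 2 - 1 - 1)))
        + (1 - 2 * s) * (((a k * y ^ (2 * k + 1)) * ((2 * m - 2 * k - 2 : ℕ) : ℝ))
              * t ^ (2 * m - 2 * k - 2 - 1))
        = Phi m a s y t (k + 1) - Phi m a s y t k := by
    intro k hk
    rw [Finset.mem_range] at hk
    have hB := hBC m a s y t k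
    rcases Nat.eq_zero_or_pos k with rfl | hk1
    · simp only [Phi, Nat.add_sub_cancel, if_pos rfl, if_neg one_ne_zero, sub_zero]
      rw [mul_add, add_assoc, hB]
      norm_num
    · have hphi1 : Phi m a s y t (k + 1) = Fterm m a s y t k := by
        simp [Phi]
      have hphi2 : Phi m a s y t k = Fterm m a s y t (k - 1) := by
        simp [Phi, Nat.pos_iff_ne_zero.mp hk1]
      rw [hphi1, hphi2, mul_add, add_assoc, hB]
      have hA : t * (((a k * t ^ (2 * m - 2 * k - 2)) * ((2 * k + 1 : ℕ) : ℝ))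
              * (((2 * k : ℕ) : ℝ) * y ^ (2 * k - 1)))
          = - Fterm m a s y t (k - 1) := by
        have hk2 : k ≤ m - 1 := by omega
        have ha := harec k hk1 hk2
        unfold Fterm
        have e1 : 2 * m - 2 * (k - 1) - 2 = 2 * (m - k) := by omega
        have e2 : 2 * m - 2 * (k - 1) - 2 - 1 = 2 * m - 2 * k - 2 + 1 := by omega
        have e3 : 2 * (k - 1) + 1 = 2 * k - 1 := by omega
        rw [e2, e1, e3, pow_succ]
        have hcast : ((2 * (m - k) : ℕ) : ℝ) = 2 * ((m : ℝ) - (k : ℝ)) := by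
          have : (k : ℝ) ≤ (m : ℝ) := by exact_mod_cast hk.le
          push_cast [Nat.sub_le m k, hk.le]
          ring
        rw [hcast, ha]
        have hk0 : (k : ℝ) ≠ 0 := Nat.cast_ne_zero.mpr (by omega)
        have hk0' : (2 * (k : ℝ) + 1) ≠ 0 := by positivity
        field_simp
        push_cast
        ring
      rw [hA]
      ring
  rw [Finset.sum_congr rfl key, Finset.sum_range_sub (Phi m a s y t)]
  have h1 : Phi m a s y t 0 = 0 := by simp [Phi]
  have h2 : Phi m a s y t m = 0 := by
    have hm0 : m ≠ 0 := by omega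
    have he : 2 * m - 2 * (m - 1) - 2 = 0 := by omega
    simp [Phi, hm0, Fterm, he]
  rw [h1, h2, sub_zero]
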